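/- Let ψ, ψ*, φ : ℂ³ → ℂ be holomorphic functions satisfying the complexified Davey–Stewartson system iψ_t + (1/2)(ψ_{ξξ} + ψ_{ηη}) + 2φψ = 0, −iψ*_t + (1/2)(ψ*_{ξξ} + ψ*_{ηη}) + 2φψ* = 0, φ_{ξη} + (1/2)((ψψ*)_{ξξ} + (ψψ*)_{ηη}) = 0 on ℂ³ (subscripts denote complex partial derivatives in the variables (ξ,η,t)). For any β ∈ ℂ∖{0} and λ₁, λ₂, α ∈ ℂ, define ψ̃(ξ,η,t) = ψ(βξ + βλ₁t, βη + βλ₂t, β²t)·exp(−i(λ₁ξ + λ₂η + (λ₁² + λ₂² − α)t/2)), ψ̃*(ξ,η,t) = β²·ψ*(βξ + βλ₁t, βη + βλ₂t, β²t)·exp(i(λ₁ξ + λ₂η + (λ₁² + λ₂² − α)t/2)), and φ̃(ξ,η,t) = β²·φ(βξ + βλ₁t, βη + βλ₂t, β²t) + α/4. Then ψ̃, ψ̃*, φ̃ satisfy the same complexified Davey–Stewartson system on ℂ³. -/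

import Mathlib

open Complex

noncomputable section

private lemma hasDerivAt_cexp_lin (c d x : ℂ) :
    HasDerivAt (fun y : ℂ => Complex.exp (c * y + d)) (c * Complex.exp (c * x + d)) x := by
  have h : HasDerivAt (fun y : ℂ => c * y + d) c x := by
    simpa using ((hasDerivAt_id x).const_mul c).add_const d
  simpa [mul_comm] using h.cexp

private lemma deriv_differentiable {f : ℂ → ℂ} (hf : Differentiable ℂ f) :
    Differentiable ℂ (deriv f) :=
  ((contDiff_infty_iff_deriv.mp hf.contDiff).2).differentiable (by norm_num)

private lemma hasDerivAt_affine_comp {f : ℂ → ℂ} (hf : Differentiable ℂ f) (b k x : ℂ) :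
    HasDerivAt (fun y => f (b * y + k)) (b * deriv f (b * x + k)) x := by
  have h : HasDerivAt (fun y : ℂ => b * y + k) b x := by
    simpa using ((hasDerivAt_id x).const_mul b).add_const k
  simpa [Function.comp_def, mul_comm] using ((hf (b * x + k)).hasDerivAt.comp x h)

private lemma deriv_sliceExp {f : ℂ → ℂ} (hf : Differentiable ℂ f) (b k c d x : ℂ) :
    deriv (fun y => f (b * y + k) * Complex.exp (c * y + d)) x
      = (b * deriv f (b * x + k) + c * f (b * x + k)) * Complex.exp (c * x + d) := by
  have h := ((hasDerivAt_affine_comp hf b k x).mul (hasDerivAt_cexp_lin c d x)).deriv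
  exact h.trans (by ring)

private lemma deriv2_sliceExp {f : ℂ → ℂ} (hf : Differentiable ℂ f) (b k c d x : ℂ) :
    deriv (fun y => deriv (fun z => f (b * z + k) * Complex.exp (c * z + d)) y) x
      = (b ^ 2 * deriv (deriv f) (b * x + k) + 2 * b * c * deriv f (b * x + k)
          + c ^ 2 * f (b * x + k)) * Complex.exp (c * x + d) := by
  have hrw : (fun y => deriv (fun z => f (b * z + k) * Complex.exp (c * z + d)) y)
      = fun y => (b * deriv f (b * y + k) + c * f (b * y + k)) * Complex.exp (c * y + d) := by
    funext y; exact deriv_sliceExp hf b k c d y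
  rw [hrw]
  have h1 := (hasDerivAt_affine_comp (deriv_differentiable hf) b k x).const_mul b
  have h2 := (hasDerivAt_affine_comp hf b k x).const_mul c
  have h := ((h1.add h2).mul (hasDerivAt_cexp_lin c d x)).deriv
  exact h.trans (by simp only [Pi.add_apply]; ring)

private lemma deriv2_sliceMul {f : ℂ → ℂ} (hf : Differentiable ℂ f) (a b k x : ℂ) :
    deriv (fun y => deriv (fun z => a * f (b * z + k)) y) x
      = a * b ^ 2 * deriv (deriv f) (b * x + k) := by
  have hrw : (fun y => deriv (fun z => a * f (b * z + k)) y)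
      = fun y => a * (b * deriv f (b * y + k)) := by
    funext y; exact ((hasDerivAt_affine_comp hf b k y).const_mul a).deriv
  rw [hrw]
  have h := (((hasDerivAt_affine_comp (deriv_differentiable hf) b k x).const_mul b).const_mul a).deriv
  rw [h]; ring

private lemma slice1 {g : ℂ → ℂ → ℂ → ℂ}
    (h : Differentiable ℂ (fun p : ℂ × ℂ × ℂ => g p.1 p.2.1 p.2.2)) (b c : ℂ) :
    Differentiable ℂ (fun x => g x b c) :=
  h.comp (differentiable_id.prodMk ((differentiable_const b).prodMk (differentiable_const c)))

private lemma slice2 {g : ℂ → ℂ → ℂ → ℂ}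
    (h : Differentiable ℂ (fun p : ℂ × ℂ × ℂ => g p.1 p.2.1 p.2.2)) (a c : ℂ) :
    Differentiable ℂ (fun y => g a y c) :=
  h.comp ((differentiable_const a).prodMk (differentiable_id.prodMk (differentiable_const c)))

private lemma slice3 {g : ℂ → ℂ → ℂ → ℂ}
    (h : Differentiable ℂ (fun p : ℂ × ℂ × ℂ => g p.1 p.2.1 p.2.2)) (a b : ℂ) :
    Differentiable ℂ (fun z => g a b z) :=
  h.comp ((differentiable_const a).prodMk ((differentiable_const b).prodMk differentiable_id))

private lemma fderiv_e1 (ψ : ℂ → ℂ → ℂ → ℂ)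
    (hψ : Differentiable ℂ (fun p : ℂ × ℂ × ℂ => ψ p.1 p.2.1 p.2.2)) (a b c : ℂ) :
    (fderiv ℂ (fun p : ℂ × ℂ × ℂ => ψ p.1 p.2.1 p.2.2) (a, b, c)) (1, 0, 0)
      = deriv (fun z => ψ z b c) a := by
  have hc : HasDerivAt (fun z : ℂ => ((z, b, c) : ℂ × ℂ × ℂ)) (1, 0, 0) a :=
    (hasDerivAt_id a).prodMk ((hasDerivAt_const a b).prodMk (hasDerivAt_const a c))
  exact ((hψ (a, b, c)).hasFDerivAt.comp_hasDerivAt a hc).deriv.symm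

private lemma fderiv_e2 (ψ : ℂ → ℂ → ℂ → ℂ)
    (hψ : Differentiable ℂ (fun p : ℂ × ℂ × ℂ => ψ p.1 p.2.1 p.2.2)) (a b c : ℂ) :
    (fderiv ℂ (fun p : ℂ × ℂ × ℂ => ψ p.1 p.2.1 p.2.2) (a, b, c)) (0, 1, 0)
      = deriv (fun z => ψ a z c) b := by
  have hc : HasDerivAt (fun z : ℂ => ((a, z, c) : ℂ × ℂ × ℂ)) (0, 1, 0) b :=
    (hasDerivAt_const b a).prodMk ((hasDerivAt_id b).prodMk (hasDerivAt_const b c))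
  exact ((hψ (a, b, c)).hasFDerivAt.comp_hasDerivAt b hc).deriv.symm

private lemma fderiv_e3 (ψ : ℂ → ℂ → ℂ → ℂ)
    (hψ : Differentiable ℂ (fun p : ℂ × ℂ × ℂ => ψ p.1 p.2.1 p.2.2)) (a b c : ℂ) :
    (fderiv ℂ (fun p : ℂ × ℂ × ℂ => ψ p.1 p.2.1 p.2.2) (a, b, c)) (0, 0, 1)
      = deriv (fun z => ψ a b z) c := by
  have hc : HasDerivAt (fun z : ℂ => ((a, b, z) : ℂ × ℂ × ℂ)) (0, 0, 1) c :=
    (hasDerivAt_const c a).prodMk ((hasDerivAt_const c b).prodMk (hasDerivAt_id c))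
  exact ((hψ (a, b, c)).hasFDerivAt.comp_hasDerivAt c hc).deriv.symm

private lemma fderiv_decomp (F : ℂ × ℂ × ℂ → ℂ) (q : ℂ × ℂ × ℂ) (v₁ v₂ v₃ : ℂ) :
    (fderiv ℂ F q) (v₁, v₂, v₃)
      = v₁ * (fderiv ℂ F q) (1, 0, 0) + v₂ * (fderiv ℂ F q) (0, 1, 0)
        + v₃ * (fderiv ℂ F q) (0, 0, 1) := by
  have h : ((v₁, v₂, v₃) : ℂ × ℂ × ℂ)
      = v₁ • ((1, 0, 0) : ℂ × ℂ × ℂ) + v₂ • (0, 1, 0) + v₃ • (0, 0, 1) := by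
    simp [Prod.ext_iff]
  rw [h, map_add, map_add, map_smul, map_smul, map_smul, smul_eq_mul, smul_eq_mul, smul_eq_mul]

private lemma hasDerivAt_tslice (ψ : ℂ → ℂ → ℂ → ℂ)
    (hψ : Differentiable ℂ (fun p : ℂ × ℂ × ℂ => ψ p.1 p.2.1 p.2.2))
    (a₁ a₂ b₁ b₂ b₃ x : ℂ) :
    HasDerivAt (fun y => ψ (a₁ + b₁ * y) (a₂ + b₂ * y) (b₃ * y))
      (b₁ * deriv (fun z => ψ z (a₂ + b₂ * x) (b₃ * x)) (a₁ + b₁ * x)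
        + b₂ * deriv (fun z => ψ (a₁ + b₁ * x) z (b₃ * x)) (a₂ + b₂ * x)
        + b₃ * deriv (fun z => ψ (a₁ + b₁ * x) (a₂ + b₂ * x) z) (b₃ * x)) x := by
  have hc₁ : HasDerivAt (fun y : ℂ => a₁ + b₁ * y) b₁ x := by
    simpa using ((hasDerivAt_id x).const_mul b₁).const_add a₁
  have hc₂ : HasDerivAt (fun y : ℂ => a₂ + b₂ * y) b₂ x := by
    simpa using ((hasDerivAt_id x).const_mul b₂).const_add a₂
  have hc₃ : HasDerivAt (fun y : ℂ => b₃ * y) b₃ x := by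
    simpa using (hasDerivAt_id x).const_mul b₃
  have hc := hc₁.prodMk (hc₂.prodMk hc₃)
  have h0 := ((hψ (a₁ + b₁ * x, a₂ + b₂ * x, b₃ * x)).hasFDerivAt).comp_hasDerivAt x hc
  rw [fderiv_decomp, fderiv_e1 ψ hψ, fderiv_e2 ψ hψ, fderiv_e3 ψ hψ] at h0
  exact h0

private lemma deriv_tline (ψ : ℂ → ℂ → ℂ → ℂ)
    (hψ : Differentiable ℂ (fun p : ℂ × ℂ × ℂ => ψ p.1 p.2.1 p.2.2))
    (a₁ a₂ b₁ b₂ b₃ c d x : ℂ) :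
    deriv (fun y => ψ (a₁ + b₁ * y) (a₂ + b₂ * y) (b₃ * y) * Complex.exp (c * y + d)) x
      = (b₁ * deriv (fun z => ψ z (a₂ + b₂ * x) (b₃ * x)) (a₁ + b₁ * x)
          + b₂ * deriv (fun z => ψ (a₁ + b₁ * x) z (b₃ * x)) (a₂ + b₂ * x)
          + b₃ * deriv (fun z => ψ (a₁ + b₁ * x) (a₂ + b₂ * x) z) (b₃ * x)
          + c * ψ (a₁ + b₁ * x) (a₂ + b₂ * x) (b₃ * x)) * Complex.exp (c * x + d) := by
  have h := ((hasDerivAt_tslice ψ hψ a₁ a₂ b₁ b₂ b₃ x).mul (hasDerivAt_cexp_lin c d x)).deriv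
  exact h.trans (by ring)

private lemma deriv_constmul_affine (w : ℂ → ℂ) {a b : ℂ} (ha : a ≠ 0) (hb : b ≠ 0) (k x : ℂ) :
    deriv (fun y => a * w (b * y + k)) x = a * b * deriv w (b * x + k) := by
  have haff : HasDerivAt (fun y : ℂ => b * y + k) b x := by
    simpa using ((hasDerivAt_id x).const_mul b).add_const k
  by_cases hd : DifferentiableAt ℂ w (b * x + k)
  · have h := ((hd.hasDerivAt.comp x haff).const_mul a).deriv
    exact h.trans (by ring)
  · have hg : ¬ DifferentiableAt ℂ (fun y => a * w (b * y + k)) x := by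
      intro hc
      apply hd
      have hin : DifferentiableAt ℂ (fun z : ℂ => b⁻¹ * (z - k)) (b * x + k) := by fun_prop
      have hc' : DifferentiableAt ℂ (fun y => a * w (b * y + k)) (b⁻¹ * ((b * x + k) - k)) := by
        rwa [show b⁻¹ * ((b * x + k) - k) = x by rw [add_sub_cancel_right, inv_mul_cancel_left₀ hb]]
      have h2 := (hc'.comp (b * x + k) hin).const_mul a⁻¹
      have hw : (fun z => a⁻¹ * ((fun y => a * w (b * y + k)) ∘ (fun z : ℂ => b⁻¹ * (z - k))) z)
          = w := by
        funext z
        show a⁻¹ * (a * w (b * (b⁻¹ * (z - k)) + k)) = w z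
        rw [show b * (b⁻¹ * (z - k)) + k = z by rw [mul_inv_cancel_left₀ hb, sub_add_cancel]]
        rw [inv_mul_cancel_left₀ ha]
      rwa [hw] at h2
    rw [deriv_zero_of_not_differentiableAt hd, deriv_zero_of_not_differentiableAt hg, mul_zero]

/-- invariance of the complexified Davey–Stewartson system under the
transformation induced by a change of local parameters. -/
theorem stmt_16 (ψ ψs φ : ℂ → ℂ → ℂ → ℂ)
    (hψhol : Differentiable ℂ (fun p : ℂ × ℂ × ℂ => ψ p.1 p.2.1 p.2.2))
    (hψshol : Differentiable ℂ (fun p : ℂ × ℂ × ℂ => ψs p.1 p.2.1 p.2.2))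
    (hφhol : Differentiable ℂ (fun p : ℂ × ℂ × ℂ => φ p.1 p.2.1 p.2.2))
    (hsys₁ : ∀ ξ η t : ℂ,
      I * deriv (fun t' : ℂ => ψ ξ η t') t
        + (1 / 2) * (deriv (fun ξ' : ℂ => deriv (fun ξ'' : ℂ => ψ ξ'' η t) ξ') ξ
            + deriv (fun η' : ℂ => deriv (fun η'' : ℂ => ψ ξ η'' t) η') η)
        + 2 * φ ξ η t * ψ ξ η t = 0)
    (hsys₂ : ∀ ξ η t : ℂ,
      -I * deriv (fun t' : ℂ => ψs ξ η t') t
        + (1 / 2) * (deriv (fun ξ' : ℂ => deriv (fun ξ'' : ℂ => ψs ξ'' η t) ξ') ξ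
            + deriv (fun η' : ℂ => deriv (fun η'' : ℂ => ψs ξ η'' t) η') η)
        + 2 * φ ξ η t * ψs ξ η t = 0)
    (hsys₃ : ∀ ξ η t : ℂ,
      deriv (fun ξ' : ℂ => deriv (fun η' : ℂ => φ ξ' η' t) η) ξ
        + (1 / 2) * (deriv (fun ξ' : ℂ =>
              deriv (fun ξ'' : ℂ => ψ ξ'' η t * ψs ξ'' η t) ξ') ξ
            + deriv (fun η' : ℂ =>
              deriv (fun η'' : ℂ => ψ ξ η'' t * ψs ξ η'' t) η') η) = 0)
    (β lam₁ lam₂ α : ℂ) (hβ : β ≠ 0)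
    (ψt ψst φt : ℂ → ℂ → ℂ → ℂ)
    (hψt : ∀ ξ η t : ℂ, ψt ξ η t =
      ψ (β * ξ + β * lam₁ * t) (β * η + β * lam₂ * t) (β ^ 2 * t) *
        Complex.exp (-(I * (lam₁ * ξ + lam₂ * η + (lam₁ ^ 2 + lam₂ ^ 2 - α) * t / 2))))
    (hψst : ∀ ξ η t : ℂ, ψst ξ η t =
      β ^ 2 * ψs (β * ξ + β * lam₁ * t) (β * η + β * lam₂ * t) (β ^ 2 * t) *
        Complex.exp (I * (lam₁ * ξ + lam₂ * η + (lam₁ ^ 2 + lam₂ ^ 2 - α) * t / 2)))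
    (hφt : ∀ ξ η t : ℂ, φt ξ η t =
      β ^ 2 * φ (β * ξ + β * lam₁ * t) (β * η + β * lam₂ * t) (β ^ 2 * t) + α / 4) :
    (∀ ξ η t : ℂ,
      I * deriv (fun t' : ℂ => ψt ξ η t') t
        + (1 / 2) * (deriv (fun ξ' : ℂ => deriv (fun ξ'' : ℂ => ψt ξ'' η t) ξ') ξ
            + deriv (fun η' : ℂ => deriv (fun η'' : ℂ => ψt ξ η'' t) η') η)
        + 2 * φt ξ η t * ψt ξ η t = 0) ∧
    (∀ ξ η t : ℂ,
      -I * deriv (fun t' : ℂ => ψst ξ η t') t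
        + (1 / 2) * (deriv (fun ξ' : ℂ => deriv (fun ξ'' : ℂ => ψst ξ'' η t) ξ') ξ
            + deriv (fun η' : ℂ => deriv (fun η'' : ℂ => ψst ξ η'' t) η') η)
        + 2 * φt ξ η t * ψst ξ η t = 0) ∧
    (∀ ξ η t : ℂ,
      deriv (fun ξ' : ℂ => deriv (fun η' : ℂ => φt ξ' η' t) η) ξ
        + (1 / 2) * (deriv (fun ξ' : ℂ =>
              deriv (fun ξ'' : ℂ => ψt ξ'' η t * ψst ξ'' η t) ξ') ξ
            + deriv (fun η' : ℂ =>
              deriv (fun η'' : ℂ => ψt ξ η'' t * ψst ξ η'' t) η') η) = 0) := by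
  refine ⟨?_, ?_, ?_⟩
  · -- first equation
    intro ξ η t
    have hf1 : Differentiable ℂ (fun z => ψ z (β * η + β * lam₂ * t) (β ^ 2 * t)) :=
      slice1 hψhol _ _
    have hf2 : Differentiable ℂ (fun z => ψ (β * ξ + β * lam₁ * t) z (β ^ 2 * t)) :=
      slice2 hψhol _ _
    have e0 : (fun t' : ℂ => ψt ξ η t') = fun y : ℂ =>
        ψ (β * ξ + β * lam₁ * y) (β * η + β * lam₂ * y) (β ^ 2 * y) *
          Complex.exp ((-(I * (lam₁ ^ 2 + lam₂ ^ 2 - α) / 2)) * y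
            + (-(I * (lam₁ * ξ + lam₂ * η)))) := by
      funext y; rw [hψt]; congr 2; ring
    have e1 : (fun ξ'' : ℂ => ψt ξ'' η t) = fun y : ℂ =>
        ψ (β * y + β * lam₁ * t) (β * η + β * lam₂ * t) (β ^ 2 * t) *
          Complex.exp ((-(I * lam₁)) * y
            + (-(I * (lam₂ * η + (lam₁ ^ 2 + lam₂ ^ 2 - α) * t / 2)))) := by
      funext y; rw [hψt]; congr 2; ring
    have e2 : (fun η'' : ℂ => ψt ξ η'' t) = fun y : ℂ =>
        ψ (β * ξ + β * lam₁ * t) (β * y + β * lam₂ * t) (β ^ 2 * t) *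
          Complex.exp ((-(I * lam₂)) * y
            + (-(I * (lam₁ * ξ + (lam₁ ^ 2 + lam₂ ^ 2 - α) * t / 2)))) := by
      funext y; rw [hψt]; congr 2; ring
    rw [e0, e1, e2, hψt ξ η t, hφt ξ η t,
      deriv_tline ψ hψhol (β * ξ) (β * η) (β * lam₁) (β * lam₂) (β ^ 2)
        (-(I * (lam₁ ^ 2 + lam₂ ^ 2 - α) / 2)) (-(I * (lam₁ * ξ + lam₂ * η))) t,
      deriv2_sliceExp hf1 β (β * lam₁ * t) (-(I * lam₁))
        (-(I * (lam₂ * η + (lam₁ ^ 2 + lam₂ ^ 2 - α) * t / 2))) ξ,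
      deriv2_sliceExp hf2 β (β * lam₂ * t) (-(I * lam₂))
        (-(I * (lam₁ * ξ + (lam₁ ^ 2 + lam₂ ^ 2 - α) * t / 2))) η,
      show (-(I * (lam₁ ^ 2 + lam₂ ^ 2 - α) / 2)) * t + (-(I * (lam₁ * ξ + lam₂ * η)))
          = -(I * (lam₁ * ξ + lam₂ * η + (lam₁ ^ 2 + lam₂ ^ 2 - α) * t / 2)) from by ring,
      show (-(I * lam₁)) * ξ + (-(I * (lam₂ * η + (lam₁ ^ 2 + lam₂ ^ 2 - α) * t / 2)))
          = -(I * (lam₁ * ξ + lam₂ * η + (lam₁ ^ 2 + lam₂ ^ 2 - α) * t / 2)) from by ring,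
      show (-(I * lam₂)) * η + (-(I * (lam₁ * ξ + (lam₁ ^ 2 + lam₂ ^ 2 - α) * t / 2)))
          = -(I * (lam₁ * ξ + lam₂ * η + (lam₁ ^ 2 + lam₂ ^ 2 - α) * t / 2)) from by ring]
    linear_combination (β ^ 2 *
        Complex.exp (-(I * (lam₁ * ξ + lam₂ * η + (lam₁ ^ 2 + lam₂ ^ 2 - α) * t / 2)))) *
      hsys₁ (β * ξ + β * lam₁ * t) (β * η + β * lam₂ * t) (β ^ 2 * t)
      + (1 / 2 * α * ψ (β * ξ + β * lam₁ * t) (β * η + β * lam₂ * t) (β ^ 2 * t) *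
        Complex.exp (-(I * (lam₁ * ξ + lam₂ * η + (lam₁ ^ 2 + lam₂ ^ 2 - α) * t / 2)))) *
        Complex.I_sq
  · -- second equation
    intro ξ η t
    have hg1 : Differentiable ℂ (fun z => β ^ 2 * ψs z (β * η + β * lam₂ * t) (β ^ 2 * t)) :=
      (slice1 hψshol _ _).const_mul (β ^ 2)
    have hg2 : Differentiable ℂ (fun z => β ^ 2 * ψs (β * ξ + β * lam₁ * t) z (β ^ 2 * t)) :=
      (slice2 hψshol _ _).const_mul (β ^ 2)
    have e0 : (fun t' : ℂ => ψst ξ η t') = fun y : ℂ =>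
        β ^ 2 * ψs (β * ξ + β * lam₁ * y) (β * η + β * lam₂ * y) (β ^ 2 * y) *
          Complex.exp ((I * (lam₁ ^ 2 + lam₂ ^ 2 - α) / 2) * y
            + (I * (lam₁ * ξ + lam₂ * η))) := by
      funext y; rw [hψst]; congr 2; ring
    have e1 : (fun ξ'' : ℂ => ψst ξ'' η t) = fun y : ℂ =>
        β ^ 2 * ψs (β * y + β * lam₁ * t) (β * η + β * lam₂ * t) (β ^ 2 * t) *
          Complex.exp ((I * lam₁) * y
            + (I * (lam₂ * η + (lam₁ ^ 2 + lam₂ ^ 2 - α) * t / 2))) := by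
      funext y; rw [hψst]; congr 2; ring
    have e2 : (fun η'' : ℂ => ψst ξ η'' t) = fun y : ℂ =>
        β ^ 2 * ψs (β * ξ + β * lam₁ * t) (β * y + β * lam₂ * t) (β ^ 2 * t) *
          Complex.exp ((I * lam₂) * y
            + (I * (lam₁ * ξ + (lam₁ ^ 2 + lam₂ ^ 2 - α) * t / 2))) := by
      funext y; rw [hψst]; congr 2; ring
    have cdd1 : deriv (deriv (fun z => β ^ 2 * ψs z (β * η + β * lam₂ * t) (β ^ 2 * t)))
          (β * ξ + β * lam₁ * t)
        = β ^ 2 * deriv (deriv (fun z => ψs z (β * η + β * lam₂ * t) (β ^ 2 * t)))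
          (β * ξ + β * lam₁ * t) := by
      have hs := slice1 hψshol (β * η + β * lam₂ * t) (β ^ 2 * t)
      have hq : deriv (fun z => β ^ 2 * ψs z (β * η + β * lam₂ * t) (β ^ 2 * t))
          = fun z => β ^ 2 * deriv (fun z' => ψs z' (β * η + β * lam₂ * t) (β ^ 2 * t)) z := by
        funext z; exact ((hs z).hasDerivAt.const_mul (β ^ 2)).deriv
      rw [hq]
      exact (((deriv_differentiable hs) (β * ξ + β * lam₁ * t)).hasDerivAt.const_mul
        (β ^ 2)).deriv
    have cdd2 : deriv (deriv (fun z => β ^ 2 * ψs (β * ξ + β * lam₁ * t) z (β ^ 2 * t)))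
          (β * η + β * lam₂ * t)
        = β ^ 2 * deriv (deriv (fun z => ψs (β * ξ + β * lam₁ * t) z (β ^ 2 * t)))
          (β * η + β * lam₂ * t) := by
      have hs := slice2 hψshol (β * ξ + β * lam₁ * t) (β ^ 2 * t)
      have hq : deriv (fun z => β ^ 2 * ψs (β * ξ + β * lam₁ * t) z (β ^ 2 * t))
          = fun z => β ^ 2 * deriv (fun z' => ψs (β * ξ + β * lam₁ * t) z' (β ^ 2 * t)) z := by
        funext z; exact ((hs z).hasDerivAt.const_mul (β ^ 2)).deriv
      rw [hq]
      exact (((deriv_differentiable hs) (β * η + β * lam₂ * t)).hasDerivAt.const_mul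
        (β ^ 2)).deriv
    have ct3 : deriv (fun z => β ^ 2 * ψs (β * ξ + β * lam₁ * t) (β * η + β * lam₂ * t) z)
          (β ^ 2 * t)
        = β ^ 2 * deriv (fun z => ψs (β * ξ + β * lam₁ * t) (β * η + β * lam₂ * t) z)
          (β ^ 2 * t) :=
      ((slice3 hψshol (β * ξ + β * lam₁ * t) (β * η + β * lam₂ * t) (β ^ 2 * t)).hasDerivAt.const_mul
        (β ^ 2)).deriv
    rw [e0, e1, e2, hψst ξ η t, hφt ξ η t,
      deriv_tline (fun a b c => β ^ 2 * ψs a b c) (hψshol.const_mul (β ^ 2))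
        (β * ξ) (β * η) (β * lam₁) (β * lam₂) (β ^ 2)
        (I * (lam₁ ^ 2 + lam₂ ^ 2 - α) / 2) (I * (lam₁ * ξ + lam₂ * η)) t,
      deriv2_sliceExp hg1 β (β * lam₁ * t) (I * lam₁)
        (I * (lam₂ * η + (lam₁ ^ 2 + lam₂ ^ 2 - α) * t / 2)) ξ,
      deriv2_sliceExp hg2 β (β * lam₂ * t) (I * lam₂)
        (I * (lam₁ * ξ + (lam₁ ^ 2 + lam₂ ^ 2 - α) * t / 2)) η,
      cdd1, cdd2, ct3,
      show (I * (lam₁ ^ 2 + lam₂ ^ 2 - α) / 2) * t + (I * (lam₁ * ξ + lam₂ * η))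
          = I * (lam₁ * ξ + lam₂ * η + (lam₁ ^ 2 + lam₂ ^ 2 - α) * t / 2) from by ring,
      show (I * lam₁) * ξ + (I * (lam₂ * η + (lam₁ ^ 2 + lam₂ ^ 2 - α) * t / 2))
          = I * (lam₁ * ξ + lam₂ * η + (lam₁ ^ 2 + lam₂ ^ 2 - α) * t / 2) from by ring,
      show (I * lam₂) * η + (I * (lam₁ * ξ + (lam₁ ^ 2 + lam₂ ^ 2 - α) * t / 2))
          = I * (lam₁ * ξ + lam₂ * η + (lam₁ ^ 2 + lam₂ ^ 2 - α) * t / 2) from by ring]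
    linear_combination (β ^ 4 *
        Complex.exp (I * (lam₁ * ξ + lam₂ * η + (lam₁ ^ 2 + lam₂ ^ 2 - α) * t / 2))) *
      hsys₂ (β * ξ + β * lam₁ * t) (β * η + β * lam₂ * t) (β ^ 2 * t)
      + (1 / 2 * β ^ 2 * α * ψs (β * ξ + β * lam₁ * t) (β * η + β * lam₂ * t) (β ^ 2 * t) *
        Complex.exp (I * (lam₁ * ξ + lam₂ * η + (lam₁ ^ 2 + lam₂ ^ 2 - α) * t / 2))) *
        Complex.I_sq
  · -- third equation
    intro ξ η t
    have hq1 : Differentiable ℂ (fun z =>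
        ψ z (β * η + β * lam₂ * t) (β ^ 2 * t) * ψs z (β * η + β * lam₂ * t) (β ^ 2 * t)) :=
      (slice1 hψhol _ _).mul (slice1 hψshol _ _)
    have hq2 : Differentiable ℂ (fun z =>
        ψ (β * ξ + β * lam₁ * t) z (β ^ 2 * t) * ψs (β * ξ + β * lam₁ * t) z (β ^ 2 * t)) :=
      (slice2 hψhol _ _).mul (slice2 hψshol _ _)
    have e3 : (fun ξ'' : ℂ => ψt ξ'' η t * ψst ξ'' η t) = fun y : ℂ =>
        β ^ 2 * (ψ (β * y + β * lam₁ * t) (β * η + β * lam₂ * t) (β ^ 2 * t) *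
          ψs (β * y + β * lam₁ * t) (β * η + β * lam₂ * t) (β ^ 2 * t)) := by
      funext y; rw [hψt, hψst]
      have hE : Complex.exp (-(I * (lam₁ * y + lam₂ * η + (lam₁ ^ 2 + lam₂ ^ 2 - α) * t / 2)))
          * Complex.exp (I * (lam₁ * y + lam₂ * η + (lam₁ ^ 2 + lam₂ ^ 2 - α) * t / 2)) = 1 := by
        rw [← Complex.exp_add]; simp
      linear_combination (β ^ 2 * ψ (β * y + β * lam₁ * t) (β * η + β * lam₂ * t) (β ^ 2 * t) *
        ψs (β * y + β * lam₁ * t) (β * η + β * lam₂ * t) (β ^ 2 * t)) * hE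
    have e4 : (fun η'' : ℂ => ψt ξ η'' t * ψst ξ η'' t) = fun y : ℂ =>
        β ^ 2 * (ψ (β * ξ + β * lam₁ * t) (β * y + β * lam₂ * t) (β ^ 2 * t) *
          ψs (β * ξ + β * lam₁ * t) (β * y + β * lam₂ * t) (β ^ 2 * t)) := by
      funext y; rw [hψt, hψst]
      have hE : Complex.exp (-(I * (lam₁ * ξ + lam₂ * y + (lam₁ ^ 2 + lam₂ ^ 2 - α) * t / 2)))
          * Complex.exp (I * (lam₁ * ξ + lam₂ * y + (lam₁ ^ 2 + lam₂ ^ 2 - α) * t / 2)) = 1 := by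
        rw [← Complex.exp_add]; simp
      linear_combination (β ^ 2 * ψ (β * ξ + β * lam₁ * t) (β * y + β * lam₂ * t) (β ^ 2 * t) *
        ψs (β * ξ + β * lam₁ * t) (β * y + β * lam₂ * t) (β ^ 2 * t)) * hE
    have einner : (fun ξ' : ℂ => deriv (fun η' : ℂ => φt ξ' η' t) η) = fun ξ' : ℂ =>
        β ^ 2 * β * deriv (fun y => φ (β * ξ' + β * lam₁ * t) y (β ^ 2 * t))
          (β * η + β * lam₂ * t) := by
      funext ξ'
      have hg : Differentiable ℂ (fun y => φ (β * ξ' + β * lam₁ * t) y (β ^ 2 * t)) :=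
        slice2 hφhol _ _
      have hrw : (fun η' : ℂ => φt ξ' η' t) = fun η' : ℂ =>
          β ^ 2 * φ (β * ξ' + β * lam₁ * t) (β * η' + β * lam₂ * t) (β ^ 2 * t) + α / 4 := by
        funext η'; rw [hφt]
      rw [hrw]
      have h := (((hasDerivAt_affine_comp hg β (β * lam₂ * t) η).const_mul
        (β ^ 2)).add_const (α / 4)).deriv
      rw [h]; ring
    have hab : β ^ 2 * β ≠ 0 := mul_ne_zero (pow_ne_zero 2 hβ) hβ
    rw [einner,
      deriv_constmul_affine
        (fun z => deriv (fun y => φ z y (β ^ 2 * t)) (β * η + β * lam₂ * t)) hab hβ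
        (β * lam₁ * t) ξ,
      e3, e4,
      deriv2_sliceMul hq1 (β ^ 2) β (β * lam₁ * t) ξ,
      deriv2_sliceMul hq2 (β ^ 2) β (β * lam₂ * t) η]
    linear_combination (β ^ 4 : ℂ) *
      hsys₃ (β * ξ + β * lam₁ * t) (β * η + β * lam₂ * t) (β ^ 2 * t)
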